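/- Descent lemma for projected gradient descent: if f : ℝⁿ → ℝ is L-smooth (L > 0), C ⊆ ℝⁿ is nonempty closed convex, x ∈ C, η = 1/L, x⁺ = Proj_C(x - η∇f(x)), and G = (x - x⁺)/η, then f(x⁺) ≤ f(x) - (1/(2L))‖G‖². -/

import Mathlib

open intervalIntegral

/-- Descent lemma: quadratic upper bound for L-smooth functions. -/
lemma smooth_descent {F : Type*} [NormedAddCommGroup F] [InnerProductSpace ℝ F]
    [CompleteSpace F]
    (f : F → ℝ) (L : ℝ) (hL : 0 ≤ L) (hdiff : Differentiable ℝ f)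
    (hlip : ∀ x y : F, ‖gradient f x - gradient f y‖ ≤ L * ‖x - y‖)
    (a b : F) :
    f b ≤ f a + inner ℝ (gradient f a) (b - a) + L / 2 * ‖b - a‖ ^ 2 := by
  set v := b - a with hv
  set g := gradient f with hg
  have hgcont : Continuous g := by
    apply (LipschitzWith.of_dist_le_mul (K := ⟨L, hL⟩) ?_).continuous
    intro p q
    rw [dist_eq_norm, dist_eq_norm]; exact hlip p q
  have hφ : ∀ t : ℝ, HasDerivAt (fun t : ℝ => f (a + t • v))
      (inner ℝ (g (a + t • v)) v : ℝ) t := by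
    intro t
    have hline : HasDerivAt (fun t : ℝ => a + t • v) v t := by
      simpa using ((hasDerivAt_id t).smul_const v).const_add a
    have hf : HasFDerivAt f (InnerProductSpace.toDual ℝ F (g (a + t • v))) (a + t • v) :=
      (hdiff (a + t • v)).hasGradientAt.hasFDerivAt
    have h := hf.comp_hasDerivAt t hline; simp at h; exact h
  have hcont : Continuous (fun t : ℝ => (inner ℝ (g (a + t • v)) v : ℝ)) := by
    exact (hgcont.comp (by continuity)).inner continuous_const
  have hFTC : f b - f a = ∫ t in (0:ℝ)..1, (inner ℝ (g (a + t • v)) v : ℝ) := by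
    have := intervalIntegral.integral_eq_sub_of_hasDerivAt
      (f := fun t : ℝ => f (a + t • v)) (a := 0) (b := 1)
      (fun t _ => hφ t) (hcont.intervalIntegrable 0 1)
    simpa [hv] using this.symm
  have hbound : ∀ t ∈ Set.Icc (0:ℝ) 1,
      (inner ℝ (g (a + t • v)) v : ℝ) ≤ inner ℝ (g a) v + L * t * ‖v‖ ^ 2 := by
    intro t ht
    have h1 : (inner ℝ (g (a + t • v)) v : ℝ) - inner ℝ (g a) v
        = inner ℝ (g (a + t • v) - g a) v := by
      rw [inner_sub_left]
    have h2 : (inner ℝ (g (a + t • v) - g a) v : ℝ) ≤ ‖g (a + t • v) - g a‖ * ‖v‖ :=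
      real_inner_le_norm _ _
    have h3 : ‖g (a + t • v) - g a‖ ≤ L * (t * ‖v‖) := by
      have := hlip (a + t • v) a
      simpa [norm_smul, abs_of_nonneg ht.1] using this
    nlinarith [norm_nonneg v, mul_nonneg (mul_nonneg hL ht.1) (norm_nonneg v)]
  have hint : (∫ t in (0:ℝ)..1, (inner ℝ (g (a + t • v)) v : ℝ))
      ≤ ∫ t in (0:ℝ)..1, (inner ℝ (g a) v + L * t * ‖v‖ ^ 2 : ℝ) := by
    apply intervalIntegral.integral_mono_on (le_refl 0 |>.trans zero_le_one)
      (hcont.intervalIntegrable 0 1) (by apply Continuous.intervalIntegrable; continuity)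
    exact hbound
  have hval : (∫ t in (0:ℝ)..1, (inner ℝ (g a) v + L * t * ‖v‖ ^ 2 : ℝ))
      = inner ℝ (g a) v + L / 2 * ‖v‖ ^ 2 := by
    have h1 : (∫ t in (0:ℝ)..1, (inner ℝ (g a) v + L * t * ‖v‖ ^ 2 : ℝ))
        = (∫ t in (0:ℝ)..1, (inner ℝ (g a) v : ℝ)) + ∫ t in (0:ℝ)..1, L * t * ‖v‖ ^ 2 := by
      apply intervalIntegral.integral_add
      · exact intervalIntegrable_const
      · apply Continuous.intervalIntegrable; continuity
    rw [h1]
    have h2 : (∫ t in (0:ℝ)..1, L * t * ‖v‖ ^ 2) = L / 2 * ‖v‖ ^ 2 := by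
      have : (fun t : ℝ => L * t * ‖v‖ ^ 2) = fun t : ℝ => (L * ‖v‖ ^ 2) * t := by
        ext t; ring
      rw [this, intervalIntegral.integral_const_mul, integral_id]
      ring
    simp [h2]
  linarith [hFTC, hint.trans_eq hval]

/-- Descent lemma for projected gradient descent: if `f` is `L`-smooth,
`x ∈ C`, `η = 1/L`, `x⁺ = Proj_C (x - η ∇f x)` and `G = L (x - x⁺)`, then
`f x⁺ ≤ f x - (1/(2L)) ‖G‖²`. -/
theorem pgd_descent_lemma
    {n : ℕ} (C : Set (EuclideanSpace ℝ (Fin n)))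
    (hne : C.Nonempty) (hclosed : IsClosed C) (hconv : Convex ℝ C)
    (f : EuclideanSpace ℝ (Fin n) → ℝ) (L : ℝ) (hL : 0 < L)
    (hdiff : Differentiable ℝ f)
    (hlip : ∀ x y : EuclideanSpace ℝ (Fin n),
      ‖gradient f x - gradient f y‖ ≤ L * ‖x - y‖)
    (x xplus : EuclideanSpace ℝ (Fin n)) (hx : x ∈ C) (hxplus : xplus ∈ C)
    (hmin : ∀ w ∈ C,
      ‖x - (1 / L) • gradient f x - xplus‖ ≤ ‖x - (1 / L) • gradient f x - w‖)
    (G : EuclideanSpace ℝ (Fin n)) (hG : G = L • (x - xplus)) :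
    f xplus ≤ f x - 1 / (2 * L) * ‖G‖ ^ 2 := by
  set g := gradient f with hg
  set u := x - (1 / L) • g x with hu
  -- variational inequality
  haveI : Nonempty C := hne.to_subtype
  have hinf : ‖u - xplus‖ = ⨅ w : C, ‖u - w‖ := by
    apply le_antisymm
    · exact le_ciInf fun w => hmin w w.2
    · exact ciInf_le ⟨0, fun r ⟨w, hw⟩ => hw ▸ norm_nonneg _⟩ (⟨xplus, hxplus⟩ : C)
  have hvar : ∀ w ∈ C, (inner ℝ (u - xplus) (w - xplus) : ℝ) ≤ 0 :=
    (norm_eq_iInf_iff_real_inner_le_zero hconv hxplus).mp hinf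
  have hvx : (inner ℝ (u - xplus) (x - xplus) : ℝ) ≤ 0 := hvar x hx
  -- rewrite: ⟪x - xplus, x - xplus⟫ - (1/L) ⟪g x, x - xplus⟫ ≤ 0
  have hexp : (inner ℝ (u - xplus) (x - xplus) : ℝ)
      = ‖x - xplus‖ ^ 2 - (1 / L) * inner ℝ (g x) (x - xplus) := by
    have : u - xplus = (x - xplus) - (1 / L) • g x := by
      rw [hu]; abel
    rw [this, inner_sub_left, inner_smul_left, real_inner_self_eq_norm_sq]
    simp [RCLike.conj_to_real]
  have hkey : L * ‖x - xplus‖ ^ 2 ≤ inner ℝ (g x) (x - xplus) := by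
    rw [hexp] at hvx
    have hLne : L ≠ 0 := ne_of_gt hL
    have hvx' : ‖x - xplus‖ ^ 2 ≤ 1 / L * inner ℝ (g x) (x - xplus) := by linarith
    have h3 := mul_le_mul_of_nonneg_left hvx' hL.le
    rwa [← mul_assoc, mul_one_div_cancel hLne, one_mul] at h3
  have hdesc := smooth_descent f L hL.le hdiff hlip x xplus
  have hflip : (inner ℝ (g x) (xplus - x) : ℝ) = - inner ℝ (g x) (x - xplus) := by
    rw [← inner_neg_right]; congr 1; abel
  have hnormG : ‖G‖ ^ 2 = L ^ 2 * ‖x - xplus‖ ^ 2 := by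
    rw [hG, norm_smul, mul_pow]
    simp [abs_of_pos hL]
  rw [hnormG]
  have h2 : 1 / (2 * L) * (L ^ 2 * ‖x - xplus‖ ^ 2) = L / 2 * ‖x - xplus‖ ^ 2 := by
    field_simp
  rw [h2]
  rw [hflip, norm_sub_rev] at hdesc
  linarith [hdesc, hkey]
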